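/- arXiv:2111.07115 — 3 statements merged into one kernel-verified Lean document; each statement's English description precedes it below -/
import Mathlib

section
/- For the Euclidean norm on ℝ^2, the critical radius equals (4/3)^{1/4}; that is, every unimodular lattice in ℝ^2 contains a nonzero vector of Euclidean norm at most (4/3)^{1/4}, and the bound is attained by some unimodular lattice. -/
section HermiteAux

lemma recover_zero (a b c d : ℝ) (h : a*d - b*c = 1) (p q : ℤ)
    (h1 : a*p + b*q = 0) (h2 : c*p + d*q = 0) : p = 0 ∧ q = 0 := by
  have hp : (p:ℝ) = 0 := by linear_combination d * h1 - b * h2 - (p:ℝ) * h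
  have hq : (q:ℝ) = 0 := by linear_combination a * h2 - c * h1 - (q:ℝ) * h
  exact ⟨by exact_mod_cast hp, by exact_mod_cast hq⟩

lemma Qpos (a b c d : ℝ) (h : a*d - b*c = 1) (p q : ℤ) (hpq : ¬(p = 0 ∧ q = 0)) :
    0 < (a*p+b*q)^2 + (c*p+d*q)^2 := by
  rcases lt_or_eq_of_le (by positivity : (0:ℝ) ≤ (a*p+b*q)^2 + (c*p+d*q)^2) with h' | h'
  · exact h'
  · exfalso
    have h1 : a*p + b*q = 0 := by nlinarith [sq_nonneg (a*p+b*q), sq_nonneg (c*p+d*q)]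
    have h2 : c*p + d*q = 0 := by nlinarith [sq_nonneg (a*p+b*q), sq_nonneg (c*p+d*q)]
    exact hpq (recover_zero a b c d h p q h1 h2)

lemma key_ineq (u v X Y : ℝ) : (u*X - v*Y)^2 ≤ (u^2+v^2) * (X^2+Y^2) := by
  nlinarith [sq_nonneg (v*X + u*Y)]

lemma int_abs_le (p B : ℤ) (hB : 0 ≤ B) (h : p^2 ≤ B^2) : -B ≤ p ∧ p ≤ B := by
  constructor <;> nlinarith

lemma exists_min_vec (a b c d : ℝ) (h : a*d - b*c = 1) :
    ∃ p q : ℤ, ¬(p = 0 ∧ q = 0) ∧ ∀ p' q' : ℤ, ¬(p' = 0 ∧ q' = 0) →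
      (a*p+b*q)^2 + (c*p+d*q)^2 ≤ (a*p'+b*q')^2 + (c*p'+d*q')^2 := by
  set R : ℝ := a^2 + c^2 with hR
  have hRQ : ∀ p q : ℤ, p = 1 → q = 0 → (a*p+b*q)^2 + (c*p+d*q)^2 = R := by
    intro p q hp hq; subst hp; subst hq; push_cast; ring
  have hRpos : 0 < R := by
    have := Qpos a b c d h 1 0 (by simp)
    rw [hRQ 1 0 rfl rfl] at this; exact this
  set K : ℝ := (a^2+b^2+c^2+d^2) * R with hK
  have hKnn : 0 ≤ K := by positivity
  set B : ℤ := max 1 ⌈Real.sqrt K⌉ with hB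
  have hB1 : 1 ≤ B := le_max_left _ _
  have hKB : K ≤ (B:ℝ)^2 := by
    have h1 : Real.sqrt K ≤ (B:ℝ) := by
      have : (⌈Real.sqrt K⌉ : ℝ) ≤ B := by exact_mod_cast le_max_right 1 ⌈Real.sqrt K⌉
      exact le_trans (Int.le_ceil _) this
    nlinarith [Real.sq_sqrt hKnn, Real.sqrt_nonneg K]
  have hbound : ∀ p q : ℤ, (a*p+b*q)^2 + (c*p+d*q)^2 ≤ R →
      p ∈ Finset.Icc (-B) B ∧ q ∈ Finset.Icc (-B) B := by
    intro p q hle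
    have hp2 : (p:ℝ)^2 ≤ K := by
      have hid : (p:ℝ) = d*(a*p+b*q) - b*(c*p+d*q) := by linear_combination (-(p:ℝ)) * h
      calc (p:ℝ)^2 = (d*(a*p+b*q) - b*(c*p+d*q))^2 := by rw [← hid]
        _ ≤ (d^2+b^2) * ((a*p+b*q)^2 + (c*p+d*q)^2) := key_ineq _ _ _ _
        _ ≤ K := by
            rw [hK, hR]
            nlinarith [mul_nonneg (show (0:ℝ) ≤ d^2+b^2 by positivity) (sub_nonneg.mpr hle),
              mul_nonneg (show (0:ℝ) ≤ a^2+c^2 by positivity) hRpos.le]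
    have hq2 : (q:ℝ)^2 ≤ K := by
      have hid : (q:ℝ) = a*(c*p+d*q) - c*(a*p+b*q) := by linear_combination (-(q:ℝ)) * h
      calc (q:ℝ)^2 = (a*(c*p+d*q) - c*(a*p+b*q))^2 := by rw [← hid]
        _ ≤ (a^2+c^2) * ((c*p+d*q)^2 + (a*p+b*q)^2) := key_ineq _ _ _ _
        _ ≤ K := by
            rw [hK, hR]
            nlinarith [mul_nonneg (show (0:ℝ) ≤ a^2+c^2 by positivity)
              (sub_nonneg.mpr (show (c*p+d*q)^2 + (a*p+b*q)^2 ≤ a^2+c^2 by linarith)),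
              mul_nonneg (show (0:ℝ) ≤ b^2+d^2 by positivity) hRpos.le]
    have hpB : p^2 ≤ B^2 := by exact_mod_cast le_trans hp2 hKB
    have hqB : q^2 ≤ B^2 := by exact_mod_cast le_trans hq2 hKB
    rw [Finset.mem_Icc, Finset.mem_Icc]
    exact ⟨int_abs_le p B (by omega) hpB, int_abs_le q B (by omega) hqB⟩
  set S : Finset (ℤ × ℤ) := ((Finset.Icc (-B) B) ×ˢ (Finset.Icc (-B) B)).erase (0,0) with hS
  have h10 : ((1:ℤ), (0:ℤ)) ∈ S := by
    rw [hS, Finset.mem_erase]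
    refine ⟨by simp, Finset.mem_product.mpr ⟨?_, ?_⟩⟩ <;> rw [Finset.mem_Icc] <;> omega
  obtain ⟨⟨p, q⟩, hmem, hmin⟩ := S.exists_min_image
    (fun v => (a*v.1+b*v.2)^2 + (c*v.1+d*v.2)^2) ⟨_, h10⟩
  have hpq0 : ¬(p = 0 ∧ q = 0) := by
    rw [hS, Finset.mem_erase] at hmem
    intro ⟨h1, h2⟩
    exact hmem.1 (by simp [h1, h2])
  refine ⟨p, q, hpq0, ?_⟩
  intro p' q' hpq'
  by_cases hin : (p', q') ∈ S
  · exact hmin (p', q') hin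
  · have houtside : ¬((a*p'+b*q')^2 + (c*p'+d*q')^2 ≤ R) := by
      intro hle
      obtain ⟨h1, h2⟩ := hbound p' q' hle
      apply hin
      rw [hS, Finset.mem_erase]
      refine ⟨?_, Finset.mem_product.mpr ⟨h1, h2⟩⟩
      simp only [ne_eq, Prod.mk.injEq, not_and]
      intro hp' hq'; exact (hpq' ⟨hp', hq'⟩).elim
    push_neg at houtside
    have hm := hmin (1, 0) h10
    simp only at hm
    rw [hRQ 1 0 rfl rfl] at hm
    linarith

/-- Hermite: there is a nonzero lattice vector of squared length ≤ √(4/3). -/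
lemma hermite_bound (a b c d : ℝ) (h : a*d - b*c = 1) :
    ∃ p q : ℤ, ¬(p = 0 ∧ q = 0) ∧
      (a*p+b*q)^2 + (c*p+d*q)^2 ≤ Real.sqrt (4/3) := by
  obtain ⟨p, q, hpq0, hmin⟩ := exists_min_vec a b c d h
  set m2 : ℝ := (a*p+b*q)^2 + (c*p+d*q)^2 with hm2
  have hm2pos : 0 < m2 := Qpos a b c d h p q hpq0
  have hgcd : Int.gcd p q = 1 := by
    set e : ℕ := Int.gcd p q with he
    have he0 : e ≠ 0 := by
      rw [he]; simp only [ne_eq, Int.gcd_eq_zero_iff]; tauto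
    obtain ⟨p', hp'⟩ : (e:ℤ) ∣ p := Int.gcd_dvd_left p q
    obtain ⟨q', hq'⟩ : (e:ℤ) ∣ q := Int.gcd_dvd_right p q
    have hpq' : ¬(p' = 0 ∧ q' = 0) := by
      intro ⟨h1, h2⟩
      exact hpq0 ⟨by rw [hp', h1, mul_zero], by rw [hq', h2, mul_zero]⟩
    have hQ' : m2 = (e:ℝ)^2 * ((a*p'+b*q')^2 + (c*p'+d*q')^2) := by
      rw [hm2, hp', hq']; push_cast; ring
    have hmin' := hmin p' q' hpq'
    have hQ'pos := Qpos a b c d h p' q' hpq'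
    have he1 : (e:ℝ)^2 ≤ 1 := by
      rw [hQ'] at hmin'; nlinarith
    have h2 : (e:ℤ)^2 ≤ 1 := by exact_mod_cast he1
    have h3 : (1:ℤ) ≤ (e:ℤ) := by exact_mod_cast Nat.one_le_iff_ne_zero.mpr he0
    nlinarith
  set A : ℤ := Int.gcdA p q with hA
  set Bz : ℤ := Int.gcdB p q with hBz
  have hbez : p * A + q * Bz = 1 := by
    have := Int.gcd_eq_gcd_ab p q
    rw [hgcd] at this; push_cast at this; linarith [this]
  set w0 : ℤ := -Bz with hw0
  set w1 : ℤ := A with hw1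
  have hdetw : p * w1 - q * w0 = 1 := by rw [hw0, hw1]; linarith [hbez]
  set t : ℝ := (a*p+b*q)*(a*w0+b*w1) + (c*p+d*q)*(c*w0+d*w1) with ht
  set k : ℤ := -round (t / m2) with hk
  set x0 : ℤ := w0 + k*p with hx0
  set x1 : ℤ := w1 + k*q with hx1
  have hdetx : p * x1 - q * x0 = 1 := by rw [hx0, hx1]; linear_combination hdetw
  have hxne : ¬(x0 = 0 ∧ x1 = 0) := by
    intro ⟨h1, h2⟩; rw [h1, h2] at hdetx; simp at hdetx
  have hinner : (a*p+b*q)*(a*x0+b*x1) + (c*p+d*q)*(c*x0+d*x1) = t + k * m2 := by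
    rw [ht, hm2, hx0, hx1]; push_cast; ring
  have hcross : (a*p+b*q)*(c*x0+d*x1) - (c*p+d*q)*(a*x0+b*x1) = 1 := by
    have hdx : (p:ℝ)*x1 - (q:ℝ)*x0 = 1 := by exact_mod_cast hdetx
    linear_combination ((p:ℝ)*x1 - (q:ℝ)*x0) * h + hdx
  set Qx : ℝ := (a*x0+b*x1)^2 + (c*x0+d*x1)^2 with hQx
  have hlagrange : m2 * Qx = (t + k * m2)^2 + 1 := by
    rw [hm2, hQx]
    have : ((a*p+b*q)^2 + (c*p+d*q)^2) * ((a*x0+b*x1)^2 + (c*x0+d*x1)^2)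
        = ((a*p+b*q)*(a*x0+b*x1) + (c*p+d*q)*(c*x0+d*x1))^2
          + ((a*p+b*q)*(c*x0+d*x1) - (c*p+d*q)*(a*x0+b*x1))^2 := by ring
    rw [this, hinner, hcross]; norm_num; rw [hm2]
  clear_value m2 t k x0 x1 Qx w0 w1 A Bz
  have hround : (t + k * m2)^2 ≤ m2^2 / 4 := by
    have h1 : |t / m2 - round (t / m2)| ≤ 1/2 := abs_sub_round _
    have h2 : t + k * m2 = (t/m2 - round (t/m2)) * m2 := by
      rw [hk]; push_cast; field_simp; ring
    rw [h2, mul_pow]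
    have h3 : (t/m2 - round (t/m2))^2 ≤ (1/2)^2 := by
      obtain ⟨hl, hr⟩ := abs_le.mp h1
      nlinarith
    calc (t/m2 - round (t/m2))^2 * m2^2 ≤ (1/2)^2 * m2^2 :=
          mul_le_mul_of_nonneg_right h3 (sq_nonneg m2)
      _ = m2^2 / 4 := by ring
  have hminx : m2 ≤ Qx := by rw [hQx]; exact hmin x0 x1 hxne
  have hm4 : m2^2 ≤ 4/3 := by
    nlinarith [mul_le_mul_of_nonneg_left hminx hm2pos.le, hlagrange, hround]
  refine ⟨p, q, hpq0, ?_⟩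
  have hs : (0:ℝ) ≤ (4:ℝ)/3 := by norm_num
  rw [← hm2]
  exact (Real.le_sqrt hm2pos.le hs).mpr hm4

lemma hex_form_ge_one (p q : ℤ) (hpq : ¬(p = 0 ∧ q = 0)) : 1 ≤ p^2 + p*q + q^2 := by
  have h4 : 0 < (2*p+q)^2 + 3*q^2 := by
    rcases eq_or_ne q 0 with hq | hq
    · subst hq
      have hp : p ≠ 0 := fun hp => hpq ⟨hp, rfl⟩
      have : 0 < p^2 := by positivity
      nlinarith
    · have : 0 < q^2 := by positivity
      nlinarith [sq_nonneg (2*p+q)]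
  nlinarith

lemma c_facts : ((4:ℝ)/3) ^ ((1:ℝ)/4) > 0 ∧
    (((4:ℝ)/3) ^ ((1:ℝ)/4))^2 = Real.sqrt (4/3) ∧
    Real.sqrt (Real.sqrt (4/3)) = ((4:ℝ)/3) ^ ((1:ℝ)/4) := by
  have h43 : (0:ℝ) < 4/3 := by norm_num
  have hpos : (0:ℝ) < ((4:ℝ)/3) ^ ((1:ℝ)/4) := Real.rpow_pos_of_pos h43 _
  have h2 : (((4:ℝ)/3) ^ ((1:ℝ)/4))^2 = Real.sqrt (4/3) := by
    rw [← Real.rpow_natCast (((4:ℝ)/3) ^ ((1:ℝ)/4)) 2, ← Real.rpow_mul h43.le]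
    rw [Real.sqrt_eq_rpow]
    norm_num
  refine ⟨hpos, h2, ?_⟩
  rw [← h2, Real.sqrt_sq hpos.le]

lemma mulVec_fin_two (g : Matrix (Fin 2) (Fin 2) ℝ) (v : Fin 2 → ℝ) :
    g.mulVec v 0 = g 0 0 * v 0 + g 0 1 * v 1 ∧
    g.mulVec v 1 = g 1 0 * v 0 + g 1 1 * v 1 := by
  constructor <;> simp [Matrix.mulVec, dotProduct, Fin.sum_univ_two]

end HermiteAux

def IsUnimodularLattice (d : ℕ) (Λ : Set (Fin d → ℝ)) : Prop :=
  ∃ g : Matrix (Fin d) (Fin d) ℝ, g.det = 1 ∧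
    Λ = {x | ∃ v : Fin d → ℤ, x = g.mulVec (fun i => (v i : ℝ))}

/-- The Euclidean norm on ℝ². -/
noncomputable def eucNorm2 (x : Fin 2 → ℝ) : ℝ := Real.sqrt (x 0 ^ 2 + x 1 ^ 2)

section Parts

/-- Part 1: every unimodular lattice has a short nonzero vector. -/
lemma part1 (Λ : Set (Fin 2 → ℝ)) (hΛ : IsUnimodularLattice 2 Λ) :
    ∃ x ∈ Λ, x ≠ 0 ∧ eucNorm2 x ≤ (4 / 3 : ℝ) ^ ((1 : ℝ) / 4) := by
  obtain ⟨g, hdet, rfl⟩ := hΛ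
  have hdet2 : g 0 0 * g 1 1 - g 0 1 * g 1 0 = 1 := by
    rw [Matrix.det_fin_two] at hdet; exact hdet
  obtain ⟨p, q, hpq0, hle⟩ := hermite_bound (g 0 0) (g 0 1) (g 1 0) (g 1 1) hdet2
  set v : Fin 2 → ℤ := ![p, q] with hv
  set x : Fin 2 → ℝ := g.mulVec (fun i => (v i : ℝ)) with hx
  obtain ⟨hx0, hx1⟩ := mulVec_fin_two g (fun i => (v i : ℝ))
  have hv0 : ((v 0 : ℤ) : ℝ) = (p:ℝ) := by rw [hv]; norm_num
  have hv1 : ((v 1 : ℤ) : ℝ) = (q:ℝ) := by rw [hv]; norm_num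
  have hx0' : x 0 = g 0 0 * p + g 0 1 * q := by rw [hx, hx0, hv0, hv1]
  have hx1' : x 1 = g 1 0 * p + g 1 1 * q := by rw [hx, hx1, hv0, hv1]
  refine ⟨x, ⟨v, rfl⟩, ?_, ?_⟩
  · intro hx0eq
    have e0 : x 0 = 0 := by rw [hx0eq]; rfl
    have e1 : x 1 = 0 := by rw [hx0eq]; rfl
    rw [hx0'] at e0; rw [hx1'] at e1
    exact hpq0 (recover_zero _ _ _ _ hdet2 p q e0 e1)
  · obtain ⟨hcpos, hc2, hcsqrt⟩ := c_facts
    rw [eucNorm2, hx0', hx1', ← hcsqrt]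
    exact Real.sqrt_le_sqrt hle

/-- Part 2: the hexagonal lattice attains the bound. -/
lemma part2 : ∃ Λ : Set (Fin 2 → ℝ), IsUnimodularLattice 2 Λ ∧
    ∀ x ∈ Λ, x ≠ 0 → (4 / 3 : ℝ) ^ ((1 : ℝ) / 4) ≤ eucNorm2 x := by
  obtain ⟨hcpos, hc2, hcsqrt⟩ := c_facts
  set A : ℝ := ((4:ℝ)/3) ^ ((1:ℝ)/4) with hA
  set s : ℝ := Real.sqrt 3 with hs
  have hs2 : s^2 = 3 := Real.sq_sqrt (by norm_num)
  have hsqrt43_mul : Real.sqrt (4/3) * s = 2 := by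
    rw [hs, ← Real.sqrt_mul (by norm_num : (0:ℝ) ≤ 4/3) 3]
    rw [show (4:ℝ)/3*3 = 4 by norm_num, show (4:ℝ) = 2^2 by norm_num,
      Real.sqrt_sq (by norm_num : (0:ℝ) ≤ 2)]
  set G : Matrix (Fin 2) (Fin 2) ℝ := !![A, A/2; 0, A*s/2] with hG
  have hGdet : G.det = 1 := by
    rw [hG, Matrix.det_fin_two_of]
    have : A * (A*s/2) = A^2 * s / 2 := by ring
    rw [this, hc2, mul_zero, sub_zero]
    rw [div_eq_one_iff_eq (by norm_num : (2:ℝ) ≠ 0)]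
    exact hsqrt43_mul
  refine ⟨_, ⟨G, hGdet, rfl⟩, ?_⟩
  rintro x ⟨v, rfl⟩ hxne
  set p : ℤ := v 0 with hp
  set q : ℤ := v 1 with hq
  obtain ⟨hx0, hx1⟩ := mulVec_fin_two G (fun i => (v i : ℝ))
  have hG00 : G 0 0 = A := by rw [hG]; norm_num
  have hG01 : G 0 1 = A/2 := by rw [hG]; norm_num
  have hG10 : G 1 0 = 0 := by rw [hG]; norm_num
  have hG11 : G 1 1 = A*s/2 := by rw [hG]; norm_num
  rw [hG00, hG01] at hx0
  rw [hG10, hG11] at hx1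
  have hpq0 : ¬(p = 0 ∧ q = 0) := by
    intro ⟨h1, h2⟩
    apply hxne
    funext i
    fin_cases i
    · show G.mulVec (fun i => (v i : ℝ)) 0 = 0
      rw [hx0, ← hp, ← hq, h1, h2]; norm_num
    · show G.mulVec (fun i => (v i : ℝ)) 1 = 0
      rw [hx1, ← hp, ← hq, h1, h2]; norm_num
  have hform : 1 ≤ p^2 + p*q + q^2 := hex_form_ge_one p q hpq0
  have hformR : (1:ℝ) ≤ (p:ℝ)^2 + (p:ℝ)*(q:ℝ) + (q:ℝ)^2 := by exact_mod_cast hform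
  have hsum : (G.mulVec (fun i => (v i : ℝ)) 0)^2 + (G.mulVec (fun i => (v i : ℝ)) 1)^2
      = A^2 * ((p:ℝ)^2 + (p:ℝ)*(q:ℝ) + (q:ℝ)^2) := by
    rw [hx0, hx1, ← hp, ← hq]
    linear_combination (A^2 * (q:ℝ)^2 / 4) * hs2
  have hA2pos : 0 < A^2 := by positivity
  have hge : A^2 ≤ (G.mulVec (fun i => (v i : ℝ)) 0)^2 + (G.mulVec (fun i => (v i : ℝ)) 1)^2 := by
    rw [hsum]
    nlinarith
  calc A = Real.sqrt (A^2) := (Real.sqrt_sq hcpos.le).symm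
    _ ≤ eucNorm2 (G.mulVec (fun i => (v i : ℝ))) := Real.sqrt_le_sqrt hge

end Parts

/-- The critical radius of the Euclidean norm on ℝ² equals (4/3)^{1/4}:
every unimodular lattice contains a nonzero vector of Euclidean norm at most
(4/3)^{1/4}, the bound is attained by some unimodular lattice, and the
critical radius (a sup) equals (4/3)^{1/4}. -/
theorem stmt2 :
    (∀ Λ : Set (Fin 2 → ℝ), IsUnimodularLattice 2 Λ →
        ∃ x ∈ Λ, x ≠ 0 ∧ eucNorm2 x ≤ (4 / 3 : ℝ) ^ ((1 : ℝ) / 4)) ∧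
    (∃ Λ : Set (Fin 2 → ℝ), IsUnimodularLattice 2 Λ ∧
        ∀ x ∈ Λ, x ≠ 0 → (4 / 3 : ℝ) ^ ((1 : ℝ) / 4) ≤ eucNorm2 x) ∧
    sSup {r : ℝ | 0 < r ∧ ∃ Λ : Set (Fin 2 → ℝ), IsUnimodularLattice 2 Λ ∧
        ∀ x ∈ Λ, eucNorm2 x < r → x = 0} = (4 / 3 : ℝ) ^ ((1 : ℝ) / 4) := by
  obtain ⟨hcpos, hc2, hcsqrt⟩ := c_facts
  set c : ℝ := ((4:ℝ)/3) ^ ((1:ℝ)/4) with hc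
  refine ⟨part1, part2, ?_⟩
  set T : Set ℝ := {r : ℝ | 0 < r ∧ ∃ Λ : Set (Fin 2 → ℝ), IsUnimodularLattice 2 Λ ∧
      ∀ x ∈ Λ, eucNorm2 x < r → x = 0} with hT
  have hcT : c ∈ T := by
    obtain ⟨Λ, hΛ, hmin⟩ := part2
    refine ⟨hcpos, Λ, hΛ, ?_⟩
    intro x hx hlt
    by_contra hxne
    exact absurd (hmin x hx hxne) (not_le.mpr hlt)
  have hub : ∀ r ∈ T, r ≤ c := by
    rintro r ⟨hrpos, Λ, hΛ, havoid⟩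
    by_contra hrc
    push_neg at hrc
    obtain ⟨x, hxΛ, hxne, hxle⟩ := part1 Λ hΛ
    exact hxne (havoid x hxΛ (lt_of_le_of_lt hxle hrc))
  exact le_antisymm (csSup_le ⟨c, hcT⟩ hub) (le_csSup ⟨c, hub⟩ hcT)
end

section
/- Let ω = (α, β) be a weight vector with Σα_i = Σβ_j = 1, α_i, β_j > 0, and let a_s = diag(e^{sα_1},…,e^{sα_m}, e^{−sβ_1},…,e^{−sβ_n}). For c > 0 and an m×n matrix A, define Λ_A = u_A ℤ^{m+n} with u_A = [[I_m, A],[0, I_n]]. If there exist r < 1 and s_0 > 0 such that for all s > s_0 the lattice a_s Λ_A contains a nonzero vector of sup-norm less than r, then there exist c_1 < 1 such that for all sufficiently large t the system ‖Aq − p‖_α < c_1/t, ‖q‖_β < t has a solution (p,q) ∈ ℤ^m × (ℤ^n \ {0}). -/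
/-- Dani correspondence, dynamics ⟹ Diophantine: if for some r < 1 and all
large s the lattice a_s Λ_A contains a nonzero vector of sup-norm < r, then
A improves Dirichlet's theorem with some constant c₁ < 1. -/
theorem stmt4 (m n : ℕ) (hm : 0 < m) (hn : 0 < n)
    (α : Fin m → ℝ) (β : Fin n → ℝ)
    (hα : ∀ i, 0 < α i) (hβ : ∀ j, 0 < β j)
    (hαs : ∑ i, α i = 1) (hβs : ∑ j, β j = 1)
    (A : Matrix (Fin m) (Fin n) ℝ)
    (h : ∃ r : ℝ, r < 1 ∧ ∃ s₀ : ℝ, 0 < s₀ ∧ ∀ s > s₀,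
      ∃ (p : Fin m → ℤ) (q : Fin n → ℤ), ¬(p = 0 ∧ q = 0) ∧
        (∀ i, |Real.exp (s * α i) * ((p i : ℝ) + ∑ j, A i j * (q j : ℝ))| < r) ∧
        (∀ j, |Real.exp (-(s * β j)) * (q j : ℝ)| < r)) :
    ∃ c₁ : ℝ, 0 < c₁ ∧ c₁ < 1 ∧ ∃ t₀ : ℝ, ∀ t > t₀,
      ∃ (p : Fin m → ℤ) (q : Fin n → ℤ), q ≠ 0 ∧
        (∀ i, |(∑ j, A i j * (q j : ℝ)) - (p i : ℝ)| < (c₁ / t) ^ (α i)) ∧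
        (∀ j, |(q j : ℝ)| < t ^ (β j)) := by
  obtain ⟨r, hr1, s₀, hs₀, H⟩ := h
  have hr0 : 0 < r := by
    obtain ⟨p, q, _, h1, _⟩ := H (s₀ + 1) (by linarith)
    exact lt_of_le_of_lt (abs_nonneg _) (h1 ⟨0, hm⟩)
  set c₁ : ℝ := max r (1/2) with hc₁
  have hc0 : 0 < c₁ := lt_max_of_lt_right (by norm_num)
  have hc1 : c₁ < 1 := max_lt hr1 (by norm_num)
  have hrc : r ≤ c₁ := le_max_left _ _
  refine ⟨c₁, hc0, hc1, Real.exp s₀, fun t ht => ?_⟩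
  have ht0 : 0 < t := lt_trans (Real.exp_pos s₀) ht
  set s : ℝ := Real.log t with hs
  have hss : s > s₀ := (Real.lt_log_iff_exp_lt ht0).mpr ht
  have hts : Real.exp s = t := Real.exp_log ht0
  obtain ⟨p, q, hpq, h1, h2⟩ := H s hss
  have hαle : ∀ i, α i ≤ 1 := by
    intro i
    rw [← hαs]
    exact Finset.single_le_sum (fun j _ => (hα j).le) (Finset.mem_univ i)
  have hq : q ≠ 0 := by
    intro hq0
    apply hpq
    refine ⟨?_, hq0⟩
    funext i
    have := h1 i
    simp only [hq0] at this
    simp only [Pi.zero_apply, Int.cast_zero, mul_zero, Finset.sum_const_zero,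
      add_zero] at this
    have hexp : (1 : ℝ) ≤ Real.exp (s * α i) :=
      Real.one_le_exp (mul_nonneg (by linarith : (0:ℝ) ≤ s) (hα i).le)
    have hpi : |(p i : ℝ)| < 1 := by
      rw [abs_mul, abs_of_pos (Real.exp_pos _)] at this
      nlinarith [abs_nonneg ((p i : ℝ))]
    have : p i = 0 := by
      rwa [← Int.cast_abs, ← Int.cast_one, Int.cast_lt, Int.abs_lt_one_iff] at hpi
    simpa using this
  refine ⟨fun i => -p i, q, hq, fun i => ?_, fun j => ?_⟩
  · have hi := h1 i
    rw [abs_mul, abs_of_pos (Real.exp_pos _)] at hi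
    have key : |(p i : ℝ) + ∑ j, A i j * (q j : ℝ)| < r / Real.exp (s * α i) := by
      rw [lt_div_iff₀ (Real.exp_pos _)]
      linarith [hi]
    have heq : (∑ j, A i j * (q j : ℝ)) - ((-p i : ℤ) : ℝ)
        = (p i : ℝ) + ∑ j, A i j * (q j : ℝ) := by push_cast; ring
    rw [heq]
    refine lt_of_lt_of_le key ?_
    have hdiv : (c₁ / t) ^ (α i) = c₁ ^ (α i) / Real.exp (s * α i) := by
      rw [Real.div_rpow hc0.le ht0.le, ← hts, ← Real.exp_mul]
    rw [hdiv]
    gcongr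
    calc r ≤ c₁ := hrc
      _ = c₁ ^ (1:ℝ) := (Real.rpow_one c₁).symm
      _ ≤ c₁ ^ (α i) := Real.rpow_le_rpow_of_exponent_ge hc0 hc1.le (hαle i)
  · have hj := h2 j
    rw [abs_mul, abs_of_pos (Real.exp_pos _), Real.exp_neg] at hj
    have : |(q j : ℝ)| < r * Real.exp (s * β j) := by
      have he := Real.exp_pos (s * β j)
      have h3 := mul_lt_mul_of_pos_left hj he
      rw [← mul_assoc, mul_inv_cancel₀ he.ne', one_mul, mul_comm] at h3
      exact h3
    have htb : t ^ (β j) = Real.exp (s * β j) := by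
      rw [← hts, ← Real.exp_mul]
    rw [htb]
    nlinarith [Real.exp_pos (s * β j)]
end

section
/- Let ω = (α, β) be a weight vector and a_s the corresponding one-parameter diagonal group. For an m×n matrix A and 0 < c < 1, if for all sufficiently large t the system ‖Aq − p‖_α < c/t, ‖q‖_β < t has a solution (p,q) ∈ ℤ^m × (ℤ^n \ {0}), then there exist r < 1 and s_0 > 0 such that for all s > s_0 the lattice a_s Λ_A = a_s u_A ℤ^{m+n} contains a nonzero vector of sup-norm strictly less than r. -/
/-- Dani correspondence, Diophantine ⟹ dynamics: if for some 0 < c < 1 the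
system ‖Aq − p‖_α < c/t, ‖q‖_β < t is solvable for all large t, then for some
r < 1 and all large s the lattice a_s Λ_A contains a nonzero vector of
sup-norm strictly less than r. -/
theorem stmt5 (m n : ℕ) (hm : 0 < m) (hn : 0 < n)
    (α : Fin m → ℝ) (β : Fin n → ℝ)
    (hα : ∀ i, 0 < α i) (hβ : ∀ j, 0 < β j)
    (hαs : ∑ i, α i = 1) (hβs : ∑ j, β j = 1)
    (A : Matrix (Fin m) (Fin n) ℝ)
    (c : ℝ) (hc0 : 0 < c) (hc1 : c < 1)
    (h : ∃ t₀ : ℝ, ∀ t > t₀,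
      ∃ (p : Fin m → ℤ) (q : Fin n → ℤ), q ≠ 0 ∧
        (∀ i, |(∑ j, A i j * (q j : ℝ)) - (p i : ℝ)| < (c / t) ^ (α i)) ∧
        (∀ j, |(q j : ℝ)| < t ^ (β j))) :
    ∃ r : ℝ, r < 1 ∧ ∃ s₀ : ℝ, 0 < s₀ ∧ ∀ s > s₀,
      ∃ (p : Fin m → ℤ) (q : Fin n → ℤ), ¬(p = 0 ∧ q = 0) ∧
        (∀ i, |Real.exp (s * α i) * ((p i : ℝ) + ∑ j, A i j * (q j : ℝ))| < r) ∧
        (∀ j, |Real.exp (-(s * β j)) * (q j : ℝ)| < r) := by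
  obtain ⟨t₀, ht⟩ := h
  haveI : Nonempty (Fin m) := Fin.pos_iff_nonempty.mp hm
  haveI : Nonempty (Fin n) := Fin.pos_iff_nonempty.mp hn
  set μ : ℝ := min (Finset.univ.inf' Finset.univ_nonempty α)
      (Finset.univ.inf' Finset.univ_nonempty β) with hμdef
  have hμ : 0 < μ := by
    apply lt_min
    · exact (Finset.lt_inf'_iff _).mpr fun i _ => hα i
    · exact (Finset.lt_inf'_iff _).mpr fun j _ => hβ j
  have hμα : ∀ i, μ ≤ α i := fun i =>
    (min_le_left _ _).trans (Finset.inf'_le _ (Finset.mem_univ i))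
  have hμβ : ∀ j, μ ≤ β j := fun j =>
    (min_le_right _ _).trans (Finset.inf'_le _ (Finset.mem_univ j))
  refine ⟨c ^ (μ / 2), Real.rpow_lt_one hc0.le hc1 (by positivity), ?_⟩
  have hsc : 0 < Real.sqrt c := Real.sqrt_pos.mpr hc0
  set M : ℝ := max t₀ 1 with hMdef
  have hM : 0 < M := lt_of_lt_of_le one_pos (le_max_right _ _)
  refine ⟨max 1 (Real.log (M / Real.sqrt c)),
    lt_of_lt_of_le one_pos (le_max_left _ _), fun s hs => ?_⟩
  set t : ℝ := Real.sqrt c * Real.exp s with htdef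
  have htpos : 0 < t := by positivity
  have htgt : t > t₀ := by
    have h1 : Real.log (M / Real.sqrt c) < s := lt_of_le_of_lt (le_max_right _ _) hs
    have h2 : M / Real.sqrt c < Real.exp s := by
      calc M / Real.sqrt c = Real.exp (Real.log (M / Real.sqrt c)) :=
            (Real.exp_log (by positivity)).symm
        _ < Real.exp s := Real.exp_lt_exp.mpr h1
    have : M < t := by
      rw [htdef]
      calc M = Real.sqrt c * (M / Real.sqrt c) := by field_simp
        _ < Real.sqrt c * Real.exp s := by
            exact mul_lt_mul_of_pos_left h2 hsc
    exact lt_of_le_of_lt (le_max_left _ _) this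
  obtain ⟨p, q, hq, hp1, hp2⟩ := ht t htgt
  refine ⟨-p, q, fun ⟨_, hq0⟩ => hq hq0, fun i => ?_, fun j => ?_⟩
  · have key : Real.exp (s * α i) * (c / t) ^ (α i) = Real.sqrt c ^ (α i) := by
      have hct : c / t = Real.sqrt c * Real.exp (-s) := by
        rw [htdef, Real.exp_neg]
        rw [div_mul_eq_div_div]
        rw [Real.div_sqrt]
        ring
      rw [hct, Real.mul_rpow hsc.le (Real.exp_pos _).le, ← Real.exp_mul,
        neg_mul, ← mul_assoc, mul_comm (Real.exp (s * α i)), mul_assoc,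
        ← Real.exp_add, add_neg_cancel, Real.exp_zero, mul_one]
    have hr : Real.sqrt c ^ (α i) ≤ c ^ (μ / 2) := by
      rw [Real.sqrt_eq_rpow, ← Real.rpow_mul hc0.le]
      exact Real.rpow_le_rpow_of_exponent_ge hc0 hc1.le
        (by have := hμα i; linarith)
    calc |Real.exp (s * α i) * ((((-p) i : ℤ) : ℝ) + ∑ j, A i j * (q j : ℝ))|
        = Real.exp (s * α i) * |(∑ j, A i j * (q j : ℝ)) - (p i : ℝ)| := by
          rw [abs_mul, abs_of_pos (Real.exp_pos _)]
          congr 1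
          congr 1
          simp only [Pi.neg_apply]
          push_cast
          ring
      _ < Real.exp (s * α i) * (c / t) ^ (α i) :=
          mul_lt_mul_of_pos_left (hp1 i) (Real.exp_pos _)
      _ = Real.sqrt c ^ (α i) := key
      _ ≤ c ^ (μ / 2) := hr
  · have key : Real.exp (-(s * β j)) * t ^ (β j) = Real.sqrt c ^ (β j) := by
      rw [htdef, Real.mul_rpow hsc.le (Real.exp_pos _).le, ← Real.exp_mul,
        ← mul_assoc, mul_comm (Real.exp (-(s * β j))), mul_assoc,
        ← Real.exp_add, neg_add_cancel, Real.exp_zero, mul_one]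
    have hr : Real.sqrt c ^ (β j) ≤ c ^ (μ / 2) := by
      rw [Real.sqrt_eq_rpow, ← Real.rpow_mul hc0.le]
      exact Real.rpow_le_rpow_of_exponent_ge hc0 hc1.le
        (by have := hμβ j; linarith)
    calc |Real.exp (-(s * β j)) * (q j : ℝ)|
        = Real.exp (-(s * β j)) * |(q j : ℝ)| := by
          rw [abs_mul, abs_of_pos (Real.exp_pos _)]
      _ < Real.exp (-(s * β j)) * t ^ (β j) :=
          mul_lt_mul_of_pos_left (hp2 j) (Real.exp_pos _)
      _ = Real.sqrt c ^ (β j) := key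
      _ ≤ c ^ (μ / 2) := hr
end
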